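/- For l > 0 and a decreasing sequence α, x ∈ X^k_{α·(l)} if and only if x − 2^{k−l} ∈ ⋃_{i=0}^{l−1} X^k_{α·(i)}; i.e., the ranks of level l are obtained by shifting the union of the ranks of all previous levels by half a step. -/

import Mathlib

/-- The `k`-bit reversal permutation of `{0,…,2^k−1}`. -/
def revBits (k x : ℕ) : ℕ := ∑ i ∈ Finset.range k, 2 ^ i * (x / 2 ^ (k - 1 - i) % 2)

/-- The sets of time slots `Y^k_α`.  A (decreasing) sequence `α = (l_0,…,l_r)` of the paper
is represented here as the list `[l_r, …, l_0]`, with the most recently appended level first: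
`Y^k_{()} = {0,…,2^k−1}` and `Y^k_{α·(l)} = {y ∈ Y^k_α : ⌈log₂(y − min Y^k_α + 1)⌉ = l}`. -/
noncomputable def Y (k : ℕ) : List ℕ → Finset ℕ
  | [] => Finset.range (2 ^ k)
  | l :: α => (Y k α).filter (fun y => Nat.clog 2 (y - sInf {z : ℕ | z ∈ Y k α} + 1) = l)

/-- Validity of the (reversed) sequence: the paper's `α` is strictly decreasing with
entries in `{0,…,k}`, i.e. the reversed list is strictly increasing with entries `≤ k`. -/
def ValidSeq (k : ℕ) (α : List ℕ) : Prop :=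
  List.Pairwise (· < ·) α ∧ ∀ l ∈ α, l ≤ k

/-- The ranks `X^k_α = revBits_k(Y^k_α)`. -/
noncomputable def X (k : ℕ) (α : List ℕ) : Finset ℕ := (Y k α).image (revBits k)

/-- `step^k_{()} = 1` and `step^k_{α·(l)} = 2^{k−l+1}`. -/
def stepA (k : ℕ) : List ℕ → ℕ
  | [] => 1
  | l :: _ => 2 ^ (k - l + 1)

lemma revBits_succ (m x : ℕ) : revBits (m+1) x = x / 2 ^ m % 2 + 2 * revBits m x := by
  unfold revBits
  rw [Finset.sum_range_succ', Finset.mul_sum]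
  simp only [Nat.add_sub_cancel, Nat.sub_zero, pow_zero, one_mul]
  rw [add_comm]
  congr 1
  apply Finset.sum_congr rfl
  intro i hi
  have h1 : m - (i + 1) = m - 1 - i := by omega
  rw [h1]; ring

lemma revBits_lt (m x : ℕ) : revBits m x < 2 ^ m := by
  induction m with
  | zero => simp [revBits]
  | succ n ih =>
    rw [revBits_succ]
    have := Nat.mod_lt (x / 2 ^ n) (by norm_num : (0:ℕ) < 2)
    have h2 : (2:ℕ) ^ (n+1) = 2 * 2 ^ n := by ring
    omega

lemma revBits_div_mod (m j x : ℕ) (hj : j < m) :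
    revBits m x / 2 ^ j % 2 = x / 2 ^ (m - 1 - j) % 2 := by
  induction m generalizing j with
  | zero => omega
  | succ n ih =>
    rw [revBits_succ]
    match j with
    | 0 =>
      simp only [pow_zero, Nat.div_one, Nat.add_sub_cancel, Nat.sub_zero]
      have := Nat.mod_lt x (show 0 < 2^n ^ 0 from by positivity)
      have hb : x / 2 ^ n % 2 < 2 := Nat.mod_lt _ (by norm_num)
      omega
    | j' + 1 =>
      have hj' : j' < n := by omega
      have hd : (x / 2 ^ n % 2 + 2 * revBits n x) / 2 ^ (j' + 1)
          = revBits n x / 2 ^ j' := by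
        rw [pow_succ, mul_comm (2^j') 2, ← Nat.div_div_eq_div_mul]
        congr 1
        have hb : x / 2 ^ n % 2 < 2 := Nat.mod_lt _ (by norm_num)
        omega
      rw [hd, ih _ hj']
      have he : n + 1 - 1 - (j' + 1) = n - 1 - j' := by omega
      rw [he]

lemma revBits_revBits (m x : ℕ) (hx : x < 2 ^ m) : revBits m (revBits m x) = x := by
  apply Nat.eq_of_testBit_eq
  intro i
  rw [Nat.testBit_eq_decide_div_mod_eq, Nat.testBit_eq_decide_div_mod_eq]
  by_cases hi : i < m
  · rw [revBits_div_mod m i _ hi, revBits_div_mod m (m-1-i) x (by omega)]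
    rw [show m - 1 - (m - 1 - i) = i by omega]
  · have h1 : revBits m (revBits m x) / 2 ^ i = 0 :=
      Nat.div_eq_of_lt (lt_of_lt_of_le (revBits_lt _ _) (Nat.pow_le_pow_right (by norm_num) (by omega)))
    have h2 : x / 2 ^ i = 0 :=
      Nat.div_eq_of_lt (lt_of_lt_of_le hx (Nat.pow_le_pow_right (by norm_num) (by omega)))
    rw [h1, h2]

/-- additivity over disjoint bit ranges -/
lemma revBits_add (m c p t : ℕ) (hp : 2 ^ c ∣ p) (ht : t < 2 ^ c) :
    revBits m (p + t) = revBits m p + revBits m t := by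
  unfold revBits
  rw [← Finset.sum_add_distrib]
  apply Finset.sum_congr rfl
  intro i _
  set j := m - 1 - i with hj
  obtain ⟨q, hq⟩ := hp
  rw [← mul_add]
  congr 1
  by_cases hjc : c ≤ j
  · have ht0 : t / 2 ^ j = 0 := Nat.div_eq_of_lt (lt_of_lt_of_le ht (Nat.pow_le_pow_right (by norm_num) hjc))
    have h1 : (p + t) / 2 ^ j = p / 2 ^ j := by
      have h2 : p / 2 ^ j = (p / 2 ^ c) / 2 ^ (j - c) := by
        rw [Nat.div_div_eq_div_mul, ← pow_add]
        congr 2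
        omega
      have h3 : (p + t) / 2 ^ j = ((p + t) / 2 ^ c) / 2 ^ (j - c) := by
        rw [Nat.div_div_eq_div_mul, ← pow_add]
        congr 2
        omega
      have h4 : (p + t) / 2 ^ c = p / 2 ^ c := by
        rw [hq, Nat.mul_add_div (by positivity), Nat.div_eq_of_lt ht, add_zero,
          Nat.mul_div_cancel_left _ (by positivity)]
      rw [h3, h4, h2]
    omega
  · push_neg at hjc
    have h1 : (p + t) / 2 ^ j = p / 2 ^ j + t / 2 ^ j :=
      Nat.add_div_of_dvd_right (hq ▸ Dvd.dvd.mul_right (pow_dvd_pow 2 (by omega)) q)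
    have h2 : p / 2 ^ j = 2 ^ (c - j) * q := by
      rw [hq]
      rw [show (2:ℕ) ^ c = 2 ^ (c - j) * 2 ^ j by rw [← pow_add]; congr 1; omega]
      rw [mul_assoc, mul_comm (2^j) q, ← mul_assoc, Nat.mul_div_cancel _ (by positivity)]
    have h3 : 2 ^ (c - j) * q = 2 * (2 ^ (c - j - 1) * q) := by
      rw [show (2:ℕ) ^ (c - j) = 2 * 2 ^ (c - j - 1) by rw [← pow_succ']; congr 1; omega]
      ring
    omega

/-- low bits scale up -/
lemma revBits_scale (m c t : ℕ) (hc : c ≤ m) (ht : t < 2 ^ c) :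
    revBits m t = 2 ^ (m - c) * revBits c t := by
  induction m with
  | zero => simp [revBits, show c = 0 by omega]
  | succ n ih =>
    rcases Nat.lt_or_ge c (n+1) with h | h
    · have hcn : c ≤ n := by omega
      rw [revBits_succ, ih hcn]
      have ht0 : t / 2 ^ n = 0 := Nat.div_eq_of_lt (lt_of_lt_of_le ht (Nat.pow_le_pow_right (by norm_num) hcn))
      rw [ht0]
      rw [show n + 1 - c = (n - c) + 1 by omega, pow_succ]
      ring
    · have : c = n + 1 := by omega
      subst this
      simp

/-- high bits are ignored -/
lemma revBits_ignore (m c s t : ℕ) (hc : m ≤ c) :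
    revBits m (2 ^ c * s + t) = revBits m t := by
  unfold revBits
  apply Finset.sum_congr rfl
  intro i hi
  simp only [Finset.mem_range] at hi
  set j := m - 1 - i with hj
  have hjc : j < c := by omega
  congr 1
  have h1 : (2 ^ c * s + t) / 2 ^ j = 2 ^ (c - j) * s + t / 2 ^ j := by
    rw [show (2:ℕ) ^ c * s = (2 ^ (c - j) * s) * 2 ^ j by
      rw [show (2:ℕ) ^ c = 2 ^ (c - j) * 2 ^ j by rw [← pow_add]; congr 1; omega]; ring]
    rw [add_comm, Nat.add_mul_div_right _ _ (by positivity), add_comm]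
  have h2 : 2 ^ (c - j) * s = 2 * (2 ^ (c - j - 1) * s) := by
    rw [show (2:ℕ) ^ (c - j) = 2 * 2 ^ (c - j - 1) by rw [← pow_succ']; congr 1; omega]
    ring
  omega

def msum (β : List ℕ) : ℕ := (β.map (fun l => 2 ^ l / 2)).sum

def ebound (k : ℕ) : List ℕ → ℕ
  | [] => 2 ^ k
  | a :: _ => 2 ^ a - 2 ^ a / 2

lemma clog_char (t a : ℕ) : Nat.clog 2 (t + 1) = a ↔ 2 ^ a / 2 ≤ t ∧ t < 2 ^ a := by
  rw [le_antisymm_iff]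
  have h1 : Nat.clog 2 (t + 1) ≤ a ↔ t < 2 ^ a := by
    rw [Nat.clog_le_iff_le_pow (by norm_num)]
    omega
  match a with
  | 0 =>
    have h0 : (2:ℕ) ^ 0 / 2 = 0 := rfl
    rw [h1, h0]
    exact ⟨fun ht => ⟨Nat.zero_le _, ht.1⟩, fun ht => ⟨ht.2, Nat.zero_le _⟩⟩
  | s + 1 =>
    have h2 : s + 1 ≤ Nat.clog 2 (t + 1) ↔ 2 ^ s < t + 1 := by
      rw [← Nat.lt_clog_iff_pow_lt (by norm_num)]
      omega
    rw [h1, h2]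
    have h3 : (2:ℕ) ^ (s+1) = 2 ^ s * 2 := pow_succ 2 s
    have h4 : (2:ℕ) ^ (s+1) / 2 = 2 ^ s := by omega
    rw [h4]
    omega

lemma ebound_pos (k : ℕ) (α : List ℕ) : 0 < ebound k α := by
  cases α with
  | nil => exact Nat.pow_pos (by norm_num)
  | cons a β =>
    have : 2 ^ a / 2 < 2 ^ a := Nat.div_lt_self (by positivity) (by norm_num)
    simp only [ebound]
    omega

lemma valid_tail {k a : ℕ} {β : List ℕ} (h : ValidSeq k (a :: β)) : ValidSeq k β :=
  ⟨h.1.of_cons, fun l hl => h.2 l (List.mem_cons_of_mem _ hl)⟩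

lemma pow_le_ebound {k a : ℕ} {β : List ℕ} (h : ValidSeq k (a :: β)) : 2 ^ a ≤ ebound k β := by
  cases β with
  | nil => exact Nat.pow_le_pow_right (by norm_num) (h.2 a (List.mem_cons_self))
  | cons b γ =>
    have hab : a < b := List.rel_of_pairwise_cons h.1 List.mem_cons_self
    simp only [ebound]
    have h1 : (2:ℕ) ^ b = 2 ^ a * 2 ^ (b - a) := by rw [← pow_add]; congr 1; omega
    have h2 : (2:ℕ) ^ (b - a) = 2 * 2 ^ (b - a - 1) := by rw [← pow_succ']; congr 1; omega
    have h3 : (0:ℕ) < 2 ^ (b - a - 1) := by positivity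
    have h5 : (2:ℕ) ^ b = 2 * (2 ^ a * 2 ^ (b - a - 1)) := by rw [h1, h2]; ring
    have h6 : (2:ℕ) ^ a ≤ 2 ^ a * 2 ^ (b - a - 1) := Nat.le_mul_of_pos_right _ h3
    omega

lemma Y_eq (k : ℕ) : ∀ (α : List ℕ), ValidSeq k α →
    Y k α = Finset.Ico (msum α) (msum α + ebound k α) := by
  intro α
  induction α with
  | nil =>
    intro _
    show Finset.range (2 ^ k) = _
    have h0 : msum [] = 0 := rfl
    have h1 : ebound k [] = 2 ^ k := rfl
    rw [Finset.range_eq_Ico, h0, h1, Nat.zero_add]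
  | cons a β ih =>
    intro h
    have hβ := ih (valid_tail h)
    have hinf : sInf {z : ℕ | z ∈ Y k β} = msum β := by
      rw [hβ]
      rw [show {z : ℕ | z ∈ Finset.Ico (msum β) (msum β + ebound k β)} =
        Set.Ico (msum β) (msum β + ebound k β) from by
          rw [Finset.setOf_mem, Finset.coe_Ico]]
      exact csInf_Ico (by have := ebound_pos k β; omega)
    have hae : 2 ^ a ≤ ebound k β := pow_le_ebound h
    rw [show Y k (a :: β) = (Y k β).filter
      (fun y => Nat.clog 2 (y - sInf {z : ℕ | z ∈ Y k β} + 1) = a) from rfl, hinf, hβ]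
    have hmc : msum (a :: β) = 2 ^ a / 2 + msum β := by simp [msum]
    have hec : ebound k (a :: β) = 2 ^ a - 2 ^ a / 2 := rfl
    ext y
    simp only [Finset.mem_filter, Finset.mem_Ico, hmc, hec]
    rw [clog_char (y - msum β) a]
    have hd2 : 2 ^ a / 2 ≤ 2 ^ a := Nat.div_le_self _ _
    omega

lemma msum_dvd (a : ℕ) (β : List ℕ) (hβ : ∀ l ∈ β, a < l) : 2 ^ a ∣ msum β := by
  induction β with
  | nil => simp [msum]
  | cons b γ ih =>
    have hb : a < b := hβ b (List.mem_cons_self)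
    have h1 : msum (b :: γ) = 2 ^ b / 2 + msum γ := by simp [msum]
    rw [h1]
    apply Nat.dvd_add
    · have h2 : (2:ℕ) ^ b / 2 = 2 ^ a * 2 ^ (b - 1 - a) := by
        rw [show (2:ℕ) ^ b = 2 * (2 ^ a * 2 ^ (b - 1 - a)) by
          rw [← pow_add, ← pow_succ']; congr 1; omega]
        omega
      exact h2 ▸ Dvd.intro _ rfl
    · exact ih (fun l hl => hβ l (List.mem_cons_of_mem _ hl))

lemma revBits_half (k a t : ℕ) (ha : 1 ≤ a) (hak : a ≤ k) (ht : t < 2 ^ (a - 1)) :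
    revBits k (2 ^ (a - 1) + t) = 2 ^ (k - a) + 2 ^ (k - a + 1) * revBits (a - 1) t := by
  have h1 : 2 ^ (a - 1) + t < 2 ^ a := by
    have : (2:ℕ) ^ a = 2 * 2 ^ (a - 1) := by rw [← pow_succ']; congr 1; omega
    omega
  rw [revBits_scale k a _ hak h1]
  rw [show a = (a - 1) + 1 by omega, revBits_succ]
  simp only [Nat.add_sub_cancel]
  have h2 : (2 ^ (a - 1) + t) / 2 ^ (a - 1) % 2 = 1 := by
    rw [add_comm, Nat.add_div_right _ (by positivity), Nat.div_eq_of_lt ht]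
  have h3 : revBits (a - 1) (2 ^ (a - 1) + t) = revBits (a - 1) t := by
    have := revBits_ignore (a - 1) (a - 1) 1 t (le_refl _)
    simpa using this
  rw [h2, h3]
  have h4 : k - ((a - 1) + 1) = k - a := by omega
  have h5 : k - a + 1 = (k - a) + 1 := rfl
  rw [h4, h5, pow_succ]
  ring

lemma X_mem (k a : ℕ) (β : List ℕ) (h : ValidSeq k (a :: β)) (ha : 1 ≤ a) (x : ℕ) :
    x ∈ X k (a :: β) ↔
      ∃ v < 2 ^ (a - 1), x = revBits k (msum β) + 2 ^ (k - a) + 2 ^ (k - a + 1) * v := by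
  have hak : a ≤ k := h.2 a (List.mem_cons_self)
  have hdvd : 2 ^ a ∣ msum β := msum_dvd a β (fun _ hl => List.rel_of_pairwise_cons h.1 hl)
  have hY : Y k (a :: β) = Finset.Ico (msum β + 2 ^ (a - 1)) (msum β + 2 ^ a) := by
    rw [Y_eq k _ h]
    have hmc : msum (a :: β) = 2 ^ a / 2 + msum β := by simp [msum]
    have hec : ebound k (a :: β) = 2 ^ a - 2 ^ a / 2 := rfl
    have hd : (2:ℕ) ^ a / 2 = 2 ^ (a - 1) := by
      rw [show (2:ℕ) ^ a = 2 ^ (a-1) * 2 by rw [← pow_succ]; congr 1; omega]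
      omega
    have hd2 : (2:ℕ) ^ (a - 1) ≤ 2 ^ a := Nat.pow_le_pow_right (by norm_num) (by omega)
    rw [hmc, hec, hd]
    congr 1
    · ring
    · omega
  have key : ∀ t, t < 2 ^ (a - 1) → revBits k (msum β + (2 ^ (a - 1) + t)) =
      revBits k (msum β) + 2 ^ (k - a) + 2 ^ (k - a + 1) * revBits (a - 1) t := by
    intro t ht
    rw [revBits_add k a _ _ hdvd (by
      have : (2:ℕ) ^ a = 2 * 2 ^ (a - 1) := by rw [← pow_succ']; congr 1; omega
      omega)]
    rw [revBits_half k a t ha hak ht, add_assoc]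
  simp only [X, Finset.mem_image, hY, Finset.mem_Ico]
  constructor
  · rintro ⟨y, ⟨hy1, hy2⟩, rfl⟩
    have h2a : (2:ℕ) ^ a = 2 * 2 ^ (a - 1) := by rw [← pow_succ']; congr 1; omega
    set t := y - (msum β + 2 ^ (a - 1)) with htdef
    have hyt : y = msum β + (2 ^ (a - 1) + t) := by omega
    have ht : t < 2 ^ (a - 1) := by omega
    refine ⟨revBits (a - 1) t, revBits_lt _ _, ?_⟩
    rw [hyt, key t ht]
  · rintro ⟨v, hv, rfl⟩
    set t := revBits (a - 1) v with htdef
    have ht : t < 2 ^ (a - 1) := revBits_lt _ _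
    refine ⟨msum β + (2 ^ (a - 1) + t), ?_, ?_⟩
    · have h2a : (2:ℕ) ^ a = 2 * 2 ^ (a - 1) := by rw [← pow_succ']; congr 1; omega
      omega
    · rw [key t ht, htdef, revBits_revBits _ _ hv]

lemma X_mem0 (k : ℕ) (β : List ℕ) (h : ValidSeq k (0 :: β)) (x : ℕ) :
    x ∈ X k (0 :: β) ↔ x = revBits k (msum β) := by
  have hY : Y k (0 :: β) = {msum β} := by
    rw [Y_eq k _ h]
    have hmc : msum (0 :: β) = 0 + msum β := by simp [msum]
    have hec : ebound k (0 :: β) = 1 := rfl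
    rw [hmc, hec, Nat.zero_add]
    exact Nat.Ico_succ_singleton _
  simp [X, hY]

lemma shift_id (k l i u : ℕ) (hi : 1 ≤ i) (hil : i < l) (hlk : l ≤ k) :
    2 ^ (k - l + 1) * (2 ^ (l - 1 - i) + 2 ^ (l - i) * u) = 2 ^ (k - i) + 2 ^ (k - i + 1) * u := by
  have e1 : (2:ℕ) ^ (k - l + 1) * 2 ^ (l - 1 - i) = 2 ^ (k - i) := by
    rw [← pow_add]; congr 1; omega
  have e2 : (2:ℕ) ^ (k - l + 1) * 2 ^ (l - i) = 2 ^ (k - i + 1) := by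
    rw [← pow_add]; congr 1; omega
  rw [mul_add, e1, ← mul_assoc, e2]


/-- For `l > 0`: `x ∈ X^k_{α·(l)}` iff `x − 2^{k−l}` belongs to the union of the
previous levels `⋃_{i<l} X^k_{α·(i)}`. -/
theorem X_level_shift (k : ℕ) (α : List ℕ) (l : ℕ) (h : ValidSeq k (l :: α)) (hl : 0 < l)
    (x : ℕ) :
    x ∈ X k (l :: α) ↔
      ∃ y ∈ (Finset.range l).biUnion (fun i => X k (i :: α)), (x : ℤ) - 2 ^ (k - l) = y := by
  have hlk : l ≤ k := h.2 l (List.mem_cons_self)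
  have hvalid : ∀ i < l, ValidSeq k (i :: α) := by
    intro i hi
    refine ⟨List.pairwise_cons.mpr ⟨fun b hb => ?_, h.1.of_cons⟩, ?_⟩
    · exact lt_trans hi (List.rel_of_pairwise_cons h.1 hb)
    · intro m hm
      rcases List.mem_cons.mp hm with rfl | hm'
      · omega
      · exact h.2 m (List.mem_cons_of_mem _ hm')
  rw [X_mem k l α h hl x]
  constructor
  · rintro ⟨v, hv, rfl⟩
    rcases Nat.eq_zero_or_pos v with rfl | hvpos
    · refine ⟨revBits k (msum α), ?_, ?_⟩
      · exact Finset.mem_biUnion.mpr ⟨0, Finset.mem_range.mpr hl,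
          (X_mem0 k α (hvalid 0 hl) _).mpr rfl⟩
      · push_cast
        ring
    · obtain ⟨j, m, hm, rfl⟩ := Nat.exists_eq_two_pow_mul_odd (Nat.pos_iff_ne_zero.mp hvpos)
      obtain ⟨u, rfl⟩ := hm
      set i := l - 1 - j with hidef
      have hj : j < l - 1 := by
        by_contra hc
        push_neg at hc
        have : (2:ℕ) ^ (l - 1) ≤ 2 ^ j := Nat.pow_le_pow_right (by norm_num) hc
        nlinarith [Nat.le_mul_of_pos_right (2 ^ j) (show 0 < 2 * u + 1 by omega)]
      have hi1 : 1 ≤ i := by omega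
      have hil : i < l := by omega
      have hji : j = l - 1 - i := by omega
      have hu : u < 2 ^ (i - 1) := by
        have h1 : (2:ℕ) ^ (l - 1) = 2 ^ j * 2 ^ (l - 1 - j) := by rw [← pow_add]; congr 1; omega
        have h2 : 2 * u + 1 < 2 ^ (l - 1 - j) := by
          by_contra hc
          push_neg at hc
          have := Nat.mul_le_mul_left (2 ^ j) hc
          omega
        have h3 : (2:ℕ) ^ (l - 1 - j) = 2 * 2 ^ (i - 1) := by
          rw [← pow_succ']; congr 1; omega
        omega
      have hveq : 2 ^ j * (2 * u + 1) = 2 ^ (l - 1 - i) + 2 ^ (l - i) * u := by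
        rw [← hji]
        have : (2:ℕ) ^ (l - i) = 2 ^ j * 2 := by rw [← pow_succ]; congr 1; omega
        rw [this]
        ring
      have hid : 2 ^ (k - l + 1) * (2 ^ j * (2 * u + 1)) = 2 ^ (k - i) + 2 ^ (k - i + 1) * u := by
        rw [hveq]
        exact shift_id k l i u hi1 hil hlk
      refine ⟨revBits k (msum α) + 2 ^ (k - i) + 2 ^ (k - i + 1) * u, ?_, ?_⟩
      · exact Finset.mem_biUnion.mpr ⟨i, Finset.mem_range.mpr hil,
          (X_mem k i α (hvalid i hil) hi1 _).mpr ⟨u, hu, rfl⟩⟩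
      · rw [hid]
        push_cast
        ring
  · rintro ⟨y, hymem, hxy⟩
    obtain ⟨i, hi, hyX⟩ := Finset.mem_biUnion.mp hymem
    rw [Finset.mem_range] at hi
    have hxn : x = y + 2 ^ (k - l) := by
      have h' : (x : ℤ) = (y : ℤ) + 2 ^ (k - l) := by linarith [hxy]
      exact_mod_cast h'
    rcases Nat.eq_zero_or_pos i with rfl | hipos
    · rw [X_mem0 k α (hvalid 0 hi) y] at hyX
      exact ⟨0, by positivity, by rw [hxn, hyX]; ring⟩
    · rw [X_mem k i α (hvalid i hi) hipos y] at hyX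
      obtain ⟨u, hu, rfl⟩ := hyX
      refine ⟨2 ^ (l - 1 - i) + 2 ^ (l - i) * u, ?_, ?_⟩
      · have e3 : (2:ℕ) ^ (l - i) = 2 * 2 ^ (l - 1 - i) := by
          rw [← pow_succ']; congr 1; omega
        have e4 : (2:ℕ) ^ (l - 1 - i) * 2 ^ i = 2 ^ (l - 1) := by
          rw [← pow_add]; congr 1; omega
        have hu2 : 1 + 2 * u < 2 ^ i := by
          have : (2:ℕ) ^ i = 2 * 2 ^ (i - 1) := by rw [← pow_succ']; congr 1; omega
          omega
        calc 2 ^ (l - 1 - i) + 2 ^ (l - i) * u = 2 ^ (l - 1 - i) * (1 + 2 * u) := by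
              rw [e3]; ring
          _ < 2 ^ (l - 1 - i) * 2 ^ i := mul_lt_mul_of_pos_left hu2 (by positivity)
          _ = 2 ^ (l - 1) := e4
      · rw [hxn, shift_id k l i u hipos hi hlk]
        ring
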